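/- Let E be a real Hilbert space, K ≥ 2 an integer, λ ∈ (0, 1], and f_1, …, f_K : E → ℝ differentiable with L-Lipschitz gradients (L > 0). Let w_1, …, w_K ∈ E with w̄ = (1/K)·Σ_{k=1}^K w_k, and let F(v) = Σ_{k'=1}^K f_{k'}((1/λ)·v_{k'} − ((1−λ)/(λ(K−1)))·Σ_{j≠k'} v_j). Then (1/K)·Σ_{k=1}^K ‖∇_{v_k} F(w_1,…,w_K)‖² ≤ 4·(1/λ² + (1−λ)²/(λ²(K−1)))·(1/K)·Σ_{k=1}^K [ ‖∇f_k(w_k)‖² + (L²(1−λ)²K²/(λ²(K−1)²))·‖w_k − w̄‖² ]. -/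

import Mathlib

open Finset

lemma aux_grad_affine {E : Type*} [NormedAddCommGroup E] [InnerProductSpace ℝ E] [CompleteSpace E]
    (f : E → ℝ) (g : E) (b : ℝ) (v x : E) (hf : HasGradientAt f g (b • x + v)) :
    HasGradientAt (fun y => f (b • y + v)) (b • g) x := by
  rw [hasGradientAt_iff_hasFDerivAt] at hf ⊢
  have h1 : HasFDerivAt (fun y : E => b • y + v) (b • ContinuousLinearMap.id ℝ E) x := by
    simpa using ((hasFDerivAt_id x).const_smul b).add_const v
  have h2 := hf.comp x h1
  refine h2.congr_fderiv ?_
  ext y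
  simp [real_inner_smul_left, real_inner_smul_right, mul_comm]

lemma aux_grad_sum {E : Type*} [NormedAddCommGroup E] [InnerProductSpace ℝ E] [CompleteSpace E]
    {ι : Type*} (s : Finset ι) (f : ι → E → ℝ) (g : ι → E) (x : E)
    (h : ∀ i ∈ s, HasGradientAt (f i) (g i) x) :
    HasGradientAt (fun y => ∑ i ∈ s, f i y) (∑ i ∈ s, g i) x := by
  rw [hasGradientAt_iff_hasFDerivAt]
  have h2 := HasFDerivAt.fun_sum (fun i hi => (h i hi).hasFDerivAt)
  refine h2.congr_fderiv ?_
  exact (map_sum _ _ _).symm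

set_option maxHeartbeats 1000000 in
theorem stmt_16 {E : Type*} [NormedAddCommGroup E] [InnerProductSpace ℝ E] [CompleteSpace E]
    (K : ℕ) (hK : 2 ≤ K) (lam L : ℝ) (hlam0 : 0 < lam) (hlam1 : lam ≤ 1) (hL : 0 < L)
    (f : Fin K → E → ℝ) (f' : Fin K → E → E)
    (hgrad : ∀ k x, HasGradientAt (f k) (f' k x) x)
    (hlip : ∀ k x y, ‖f' k x - f' k y‖ ≤ L * ‖x - y‖)
    (w : Fin K → E) (Fg : Fin K → E)
    (hFg : ∀ k : Fin K,
      HasGradientAt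
        (fun x : E => ∑ k', f k'
          ((1 / lam) • Function.update w k x k' -
            ((1 - lam) / (lam * ((K : ℝ) - 1))) •
              ∑ j ∈ Finset.univ.erase k', Function.update w k x j))
        (Fg k) (w k)) :
    (1 / (K : ℝ)) * ∑ k, ‖Fg k‖ ^ 2 ≤
      4 * (1 / lam ^ 2 + (1 - lam) ^ 2 / (lam ^ 2 * ((K : ℝ) - 1))) *
        ((1 / (K : ℝ)) * ∑ k, (‖f' k (w k)‖ ^ 2 +
          (L ^ 2 * (1 - lam) ^ 2 * (K : ℝ) ^ 2 / (lam ^ 2 * ((K : ℝ) - 1) ^ 2)) *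
            ‖w k - (1 / (K : ℝ)) • ∑ k', w k'‖ ^ 2)) := by
  have hKR : (2:ℝ) ≤ (K:ℝ) := by exact_mod_cast hK
  have hK1 : (1:ℝ) ≤ (K:ℝ) - 1 := by linarith
  have hK1ne : ((K:ℝ) - 1) ≠ 0 := by linarith
  have hKpos : (0:ℝ) < (K:ℝ) := by linarith
  have hKne : (K:ℝ) ≠ 0 := ne_of_gt hKpos
  have hlamne : lam ≠ 0 := ne_of_gt hlam0
  have hlam1' : (0:ℝ) ≤ 1 - lam := by linarith
  set c : ℝ := (1 - lam) / (lam * ((K:ℝ) - 1)) with hc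
  have hDpos : (0:ℝ) < lam * ((K:ℝ) - 1) := by positivity
  have hc0 : 0 ≤ c := div_nonneg hlam1' (le_of_lt hDpos)
  set u : Fin K → E := fun k' => (1/lam) • w k' - c • ∑ j ∈ Finset.univ.erase k', w j with hu
  set g : Fin K → E := fun k' => f' k' (u k') with hg
  set S : E := ∑ k', g k' with hS
  set Sw : E := ∑ k', w k' with hSw
  set a : ℝ := 1/lam + c with ha
  have hcD : c * (lam * ((K:ℝ) - 1)) = 1 - lam := div_mul_cancel₀ _ (ne_of_gt hDpos)
  have haD : a * (lam * ((K:ℝ) - 1)) = (K:ℝ) - lam := by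
    rw [ha, hc]; field_simp; try ring
  -- Step 1: identify Fg k
  have hFgEq : ∀ k, Fg k = a • g k - c • S := by
    intro k
    have hcomp : ∀ k' : Fin K, HasGradientAt
        (fun x : E => f k' ((1/lam) • Function.update w k x k' -
          c • ∑ j ∈ Finset.univ.erase k', Function.update w k x j))
        ((if k' = k then (1/lam) else -c) • g k') (w k) := by
      intro k'
      by_cases hkk : k' = k
      · subst hkk
        have hfun : (fun x : E => f k' ((1/lam) • Function.update w k' x k' -
              c • ∑ j ∈ Finset.univ.erase k', Function.update w k' x j))
            = fun x : E => f k' ((1/lam) • x + (-(c • ∑ j ∈ Finset.univ.erase k', w j))) := by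
          funext x
          congr 1
          rw [Function.update_self,
            Finset.sum_congr rfl (fun j hj => Function.update_of_ne (Finset.ne_of_mem_erase hj) _ _)]
          exact sub_eq_add_neg _ _
        have hpt : (1/lam) • w k' + (-(c • ∑ j ∈ Finset.univ.erase k', w j)) = u k' := by
          simp only [hu, sub_eq_add_neg]
        rw [hfun, if_pos rfl]
        exact aux_grad_affine (f k') (g k') (1/lam) _ (w k') (hpt ▸ hgrad k' (u k'))
      · have hkmem : k ∈ Finset.univ.erase k' :=
          Finset.mem_erase.mpr ⟨fun h => hkk h.symm, Finset.mem_univ k⟩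
        have hfun : (fun x : E => f k' ((1/lam) • Function.update w k x k' -
              c • ∑ j ∈ Finset.univ.erase k', Function.update w k x j))
            = fun x : E => f k' ((-c) • x +
              ((1/lam) • w k' - c • ∑ j ∈ (Finset.univ.erase k').erase k, w j)) := by
          funext x
          congr 1
          rw [Function.update_of_ne hkk]
          have hsum : ∑ j ∈ Finset.univ.erase k', Function.update w k x j
              = x + ∑ j ∈ (Finset.univ.erase k').erase k, w j := by
            rw [← Finset.add_sum_erase _ _ hkmem, Function.update_self]
            congr 1
            exact Finset.sum_congr rfl fun j hj => Function.update_of_ne (Finset.ne_of_mem_erase hj) _ _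
          rw [hsum, smul_add, neg_smul]
          abel
        have hpt : (-c) • w k + ((1/lam) • w k' - c • ∑ j ∈ (Finset.univ.erase k').erase k, w j)
            = u k' := by
          have heq : ∑ j ∈ Finset.univ.erase k', w j
              = w k + ∑ j ∈ (Finset.univ.erase k').erase k, w j :=
            (Finset.add_sum_erase _ _ hkmem).symm
          simp only [hu, heq, smul_add, neg_smul]
          abel
        rw [hfun, if_neg hkk]
        exact aux_grad_affine (f k') (g k') (-c) _ (w k) (hpt ▸ hgrad k' (u k'))
    have hsum := aux_grad_sum Finset.univ _ _ (w k) (fun k' _ => hcomp k')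
    have hval : ∑ k' : Fin K, (if k' = k then (1/lam) else -c) • g k'
        = a • g k - c • S := by
      rw [← Finset.add_sum_erase _ _ (Finset.mem_univ k), if_pos rfl]
      rw [Finset.sum_congr rfl (fun k' hk' => by
        rw [if_neg (Finset.ne_of_mem_erase hk')])]
      rw [← Finset.smul_sum, Finset.sum_erase_eq_sub (Finset.mem_univ k), ← hS]
      simp only [ha]
      module
    rw [hval] at hsum
    exact (hFg k).unique hsum
  -- Step 2: sum of squared norms bound
  have hterm : ∀ k : Fin K, ‖Fg k‖^2
      = a^2*‖g k‖^2 - 2*a*c*(inner ℝ (g k) S : ℝ) + c^2*‖S‖^2 := by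
    intro k
    rw [hFgEq k, @norm_sub_sq_real, norm_smul, norm_smul, real_inner_smul_left,
      real_inner_smul_right, mul_pow, mul_pow, Real.norm_eq_abs, Real.norm_eq_abs,
      sq_abs, sq_abs]
    ring
  have hsum1 : ∑ k, ‖Fg k‖^2
      = a^2 * ∑ k, ‖g k‖^2 + ((K:ℝ)*c^2 - 2*a*c) * ‖S‖^2 := by
    rw [Finset.sum_congr rfl (fun k _ => hterm k)]
    have hinner : ∑ k, (inner ℝ (g k) S : ℝ) = ‖S‖^2 := by
      rw [← sum_inner, ← hS, real_inner_self_eq_norm_sq]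
    rw [Finset.sum_add_distrib, Finset.sum_sub_distrib, ← Finset.mul_sum, ← Finset.mul_sum,
      hinner, Finset.sum_const, Finset.card_univ, Fintype.card_fin, nsmul_eq_mul]
    ring
  have h2a : (K:ℝ) * c ≤ 2 * a := by
    have h1 : ((K:ℝ)*c) * (lam * ((K:ℝ)-1)) = (K:ℝ)*(1-lam) := by
      rw [mul_assoc, hcD]
    have h2 : (2*a) * (lam * ((K:ℝ)-1)) = 2*((K:ℝ)-lam) := by
      rw [mul_assoc, haD]
    have h3 : (K:ℝ)*(1-lam) ≤ 2*((K:ℝ)-lam) := by nlinarith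
    exact le_of_mul_le_mul_right (by linarith) hDpos
  have hstep1 : ∑ k, ‖Fg k‖^2 ≤ a^2 * ∑ k, ‖g k‖^2 := by
    have hS2 : (0:ℝ) ≤ ‖S‖^2 := sq_nonneg _
    nlinarith [hsum1, mul_nonneg hc0 hS2]
  -- Step 3: per-k bound on ‖g k‖²
  have hgbound : ∀ k : Fin K, ‖g k‖^2 ≤ 2 * (‖f' k (w k)‖ ^ 2 +
      (L ^ 2 * (1 - lam) ^ 2 * (K : ℝ) ^ 2 / (lam ^ 2 * ((K : ℝ) - 1) ^ 2)) *
        ‖w k - (1 / (K : ℝ)) • Sw‖ ^ 2) := by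
    intro k
    have hdiff : u k - w k = (c*(K:ℝ)) • (w k - (1/(K:ℝ)) • Sw) := by
      rw [hu]
      simp only
      rw [hSw, Finset.sum_erase_eq_sub (Finset.mem_univ k), hc]
      rw [smul_sub, smul_sub, smul_smul]
      match_scalars <;> field_simp <;> ring
    have hnd : ‖u k - w k‖ = (c*(K:ℝ)) * ‖w k - (1/(K:ℝ)) • Sw‖ := by
      rw [hdiff, norm_smul, Real.norm_eq_abs, abs_of_nonneg (by positivity)]
    have hlipk : ‖g k - f' k (w k)‖ ≤ L * ((c*(K:ℝ)) * ‖w k - (1/(K:ℝ)) • Sw‖) := by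
      rw [← hnd]; exact hlip k (u k) (w k)
    have htri : ‖g k‖ ≤ ‖f' k (w k)‖ + ‖g k - f' k (w k)‖ := by
      calc ‖g k‖ = ‖f' k (w k) + (g k - f' k (w k))‖ := by rw [add_sub_cancel]
        _ ≤ _ := norm_add_le _ _
    have hcoef : L ^ 2 * (1 - lam) ^ 2 * (K : ℝ) ^ 2 / (lam ^ 2 * ((K : ℝ) - 1) ^ 2)
        = (L * (c * (K:ℝ)))^2 := by
      rw [hc]; field_simp
    rw [hcoef]
    have h1 : (0:ℝ) ≤ ‖g k‖ := norm_nonneg _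
    have h3 : ‖g k‖ ≤ ‖f' k (w k)‖ + L * ((c*(K:ℝ)) * ‖w k - (1/(K:ℝ)) • Sw‖) :=
      le_trans htri (by linarith)
    have h4 : ‖g k‖^2 ≤ (‖f' k (w k)‖ + L * ((c*(K:ℝ)) * ‖w k - (1/(K:ℝ)) • Sw‖))^2 :=
      pow_le_pow_left₀ h1 h3 2
    nlinarith [h4, sq_nonneg (‖f' k (w k)‖ - L * ((c*(K:ℝ)) * ‖w k - (1/(K:ℝ)) • Sw‖))]
  have hstep2 : ∑ k, ‖g k‖^2 ≤ 2 * ∑ k, (‖f' k (w k)‖ ^ 2 +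
      (L ^ 2 * (1 - lam) ^ 2 * (K : ℝ) ^ 2 / (lam ^ 2 * ((K : ℝ) - 1) ^ 2)) *
        ‖w k - (1 / (K : ℝ)) • Sw‖ ^ 2) := by
    rw [Finset.mul_sum]
    exact Finset.sum_le_sum fun k _ => hgbound k
  -- Step 4: coefficient inequality
  have ha2 : 2 * a^2 ≤ 4 * (1 / lam ^ 2 + (1 - lam) ^ 2 / (lam ^ 2 * ((K : ℝ) - 1))) := by
    have haeq : a = ((K:ℝ) - lam)/(lam*((K:ℝ)-1)) := by
      rw [ha, hc]; field_simp; try ring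
    have key : 2*((K:ℝ)-lam)^2 ≤ 4*((K:ℝ)-1)^2 + 4*(1-lam)^2*((K:ℝ)-1) := by
      have hq1 : (0:ℝ) ≤ (((K:ℝ)-1) - (1-lam))^2 := sq_nonneg _
      have hq2 : (0:ℝ) ≤ (1-lam)^2 * ((K:ℝ)-2) := mul_nonneg (sq_nonneg _) (by linarith)
      nlinarith [hq1, hq2]
    have hZ : (0:ℝ) < lam^2*((K:ℝ)-1)^2 := by positivity
    have ha2' : a^2 * (lam^2*((K:ℝ)-1)^2) = ((K:ℝ)-lam)^2 := by
      calc a^2*(lam^2*((K:ℝ)-1)^2) = (a*(lam*((K:ℝ)-1)))^2 := by ring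
        _ = ((K:ℝ)-lam)^2 := by rw [haD]
    have hA' : (1 / lam ^ 2 + (1 - lam) ^ 2 / (lam ^ 2 * ((K : ℝ) - 1))) * (lam^2*((K:ℝ)-1)^2)
        = ((K:ℝ)-1)^2 + (1-lam)^2*((K:ℝ)-1) := by
      field_simp
    have hfin : (2*a^2) * (lam^2*((K:ℝ)-1)^2)
        ≤ (4 * (1 / lam ^ 2 + (1 - lam) ^ 2 / (lam ^ 2 * ((K : ℝ) - 1)))) * (lam^2*((K:ℝ)-1)^2) := by
      calc (2*a^2) * (lam^2*((K:ℝ)-1)^2) = 2*(a^2 * (lam^2*((K:ℝ)-1)^2)) := by ring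
        _ = 2*((K:ℝ)-lam)^2 := by rw [ha2']
        _ ≤ 4*((K:ℝ)-1)^2 + 4*(1-lam)^2*((K:ℝ)-1) := key
        _ = 4*(((K:ℝ)-1)^2 + (1-lam)^2*((K:ℝ)-1)) := by ring
        _ = 4*((1 / lam ^ 2 + (1 - lam) ^ 2 / (lam ^ 2 * ((K : ℝ) - 1))) * (lam^2*((K:ℝ)-1)^2)) := by rw [hA']
        _ = _ := by ring
    exact le_of_mul_le_mul_right hfin hZ
  -- assemble
  have hXnn : (0:ℝ) ≤ ∑ k, (‖f' k (w k)‖ ^ 2 +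
      (L ^ 2 * (1 - lam) ^ 2 * (K : ℝ) ^ 2 / (lam ^ 2 * ((K : ℝ) - 1) ^ 2)) *
        ‖w k - (1 / (K : ℝ)) • Sw‖ ^ 2) := by
    apply Finset.sum_nonneg
    intro k _
    positivity
  calc (1 / (K : ℝ)) * ∑ k, ‖Fg k‖ ^ 2
      ≤ (1 / (K : ℝ)) * (a^2 * ∑ k, ‖g k‖^2) :=
        mul_le_mul_of_nonneg_left hstep1 (by positivity)
    _ ≤ (1 / (K : ℝ)) * (a^2 * (2 * ∑ k, (‖f' k (w k)‖ ^ 2 +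
          (L ^ 2 * (1 - lam) ^ 2 * (K : ℝ) ^ 2 / (lam ^ 2 * ((K : ℝ) - 1) ^ 2)) *
            ‖w k - (1 / (K : ℝ)) • Sw‖ ^ 2))) :=
        mul_le_mul_of_nonneg_left (mul_le_mul_of_nonneg_left hstep2 (sq_nonneg a)) (by positivity)
    _ = (2 * a^2) * ((1 / (K : ℝ)) * ∑ k, (‖f' k (w k)‖ ^ 2 +
          (L ^ 2 * (1 - lam) ^ 2 * (K : ℝ) ^ 2 / (lam ^ 2 * ((K : ℝ) - 1) ^ 2)) *
            ‖w k - (1 / (K : ℝ)) • Sw‖ ^ 2)) := by ring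
    _ ≤ 4 * (1 / lam ^ 2 + (1 - lam) ^ 2 / (lam ^ 2 * ((K : ℝ) - 1))) *
          ((1 / (K : ℝ)) * ∑ k, (‖f' k (w k)‖ ^ 2 +
          (L ^ 2 * (1 - lam) ^ 2 * (K : ℝ) ^ 2 / (lam ^ 2 * ((K : ℝ) - 1) ^ 2)) *
            ‖w k - (1 / (K : ℝ)) • Sw‖ ^ 2)) :=
        mul_le_mul_of_nonneg_right ha2 (by positivity)
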